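/- Let a₁, …, a_m ∈ ℝⁿ, let c₁, …, c_l ∈ ℝⁿ be linearly independent, let A ⊆ {1, …, m}, and let z ∈ ℝⁿ. Suppose there exists w ∈ ℝⁿ with ⟪cⱼ, w⟫ = 0 for all j and ⟪aᵢ, w⟫ < 0 for all i ∈ A. Then the set of multipliers Λ = {(u, v) ∈ ℝᵐ × ℝˡ : uᵢ ≥ 0 for all i, uᵢ = 0 for all i ∉ A, and Σᵢ uᵢ aᵢ + Σⱼ vⱼ cⱼ = z} is bounded: there exists M < ∞ such that every (u, v) ∈ Λ satisfies uᵢ ≤ M and |vⱼ| ≤ M for all i, j. (Core of part i of the Proposition 'MFCQ implies bounded multipliers': under MFCQ the Lagrange multiplier set of the quadratic program is bounded, with aᵢ = ∇gᵢ(θ), cⱼ = ∇hⱼ(θ), A the active set, and z = −ξ* − ∇f(θ).) -/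
import Mathlib


open scoped RealInnerProductSpace BigOperators

/-- Core of "MFCQ implies bounded multipliers": if the equality-constraint normals `c` are
linearly independent and there is an MFCQ direction `w` for the active set `A`, then the
multiplier set `{(u, v) : u ≥ 0, uᵢ = 0 for i ∉ A, Σᵢ uᵢ aᵢ + Σⱼ vⱼ cⱼ = z}` is bounded. -/
theorem mfcq_implies_bounded_multipliers {n m l : ℕ}
    (a : Fin m → EuclideanSpace ℝ (Fin n))
    (c : Fin l → EuclideanSpace ℝ (Fin n)) (hc : LinearIndependent ℝ c)
    (A : Set (Fin m)) (z : EuclideanSpace ℝ (Fin n))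
    (w : EuclideanSpace ℝ (Fin n))
    (hw_eq : ∀ j, ⟪c j, w⟫ = 0)
    (hw_act : ∀ i ∈ A, ⟪a i, w⟫ < 0) :
    ∃ M : ℝ, ∀ (u : Fin m → ℝ) (v : Fin l → ℝ),
      (∀ i, 0 ≤ u i) → (∀ i ∉ A, u i = 0) →
      (∑ i, u i • a i + ∑ j, v j • c j = z) →
      (∀ i, u i ≤ M) ∧ (∀ j, |v j| ≤ M) := by
  classical
  -- The linear map `v ↦ ∑ j, v j • c j` is injective, hence antilipschitz.
  set T : (Fin l → ℝ) →ₗ[ℝ] EuclideanSpace ℝ (Fin n) :=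
    LinearMap.lsum ℝ (fun _ ↦ ℝ) ℕ (fun j ↦ LinearMap.id.smulRight (c j)) with hT
  have hTapp : ∀ v : Fin l → ℝ, T v = ∑ j, v j • c j := by
    intro v
    simp [hT, LinearMap.lsum_apply]
  obtain ⟨K, hK0, hK⟩ := T.exists_antilipschitzWith (Fintype.linearIndependent_iff'.mp hc)
  -- A bound on the `u` part.
  have key : ∃ Mu : ℝ, 0 ≤ Mu ∧ ∀ (u : Fin m → ℝ) (v : Fin l → ℝ),
      (∀ i, 0 ≤ u i) → (∀ i ∉ A, u i = 0) →
      (∑ i, u i • a i + ∑ j, v j • c j = z) → ∀ i, u i ≤ Mu := by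
    set F : Finset (Fin m) := Finset.univ.filter (· ∈ A) with hF
    by_cases hFne : F.Nonempty
    · set ε : ℝ := F.inf' hFne (fun i => -⟪a i, w⟫) with hε
      have hεpos : 0 < ε := by
        rw [hε]
        apply (Finset.lt_inf'_iff hFne).mpr
        intro i hi
        have : i ∈ A := by simpa [hF] using hi
        linarith [hw_act i this]
      refine ⟨max 0 ((-⟪z, w⟫) / ε), le_max_left _ _, ?_⟩
      intro u v hu0 huA hsum i
      by_cases hiA : i ∈ A
      · -- take inner product with w
        have hinner : ∑ i, u i * ⟪a i, w⟫ = ⟪z, w⟫ := by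
          have := congrArg (fun x => ⟪x, w⟫) hsum
          simpa only [inner_add_left, sum_inner, real_inner_smul_left, hw_eq, mul_zero,
            Finset.sum_const_zero, add_zero] using this
        have hFsum : ∑ i ∈ F, u i * (-⟪a i, w⟫) = -⟪z, w⟫ := by
          rw [← hinner]
          rw [← Finset.sum_neg_distrib]
          rw [← Finset.sum_subset (Finset.subset_univ F)]
          · apply Finset.sum_congr rfl; intro i _; ring
          · intro i _ hi
            have : i ∉ A := by simpa [hF] using hi
            simp [huA i this]
        have hiF : i ∈ F := by simp [hF, hiA]
        have hsingle : u i * (-⟪a i, w⟫) ≤ -⟪z, w⟫ := by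
          rw [← hFsum]
          apply Finset.single_le_sum (f := fun i => u i * (-⟪a i, w⟫)) _ hiF
          intro j hj
          have hjA : j ∈ A := by simpa [hF] using hj
          have h1 := hw_act j hjA
          show 0 ≤ u j * -⟪a j, w⟫
          exact mul_nonneg (hu0 j) (by linarith)
        have hεle : ε ≤ -⟪a i, w⟫ := Finset.inf'_le _ hiF
        have : u i * ε ≤ -⟪z, w⟫ := by nlinarith [hu0 i]
        have : u i ≤ (-⟪z, w⟫) / ε := by
          rw [le_div_iff₀ hεpos]; linarith
        exact le_trans this (le_max_right _ _)
      · rw [huA i hiA]; exact le_max_left _ _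
    · refine ⟨0, le_refl _, ?_⟩
      intro u v hu0 huA hsum i
      have hiA : i ∉ A := by
        intro h
        exact hFne ⟨i, by simp [hF, h]⟩
      simp [huA i hiA]
  obtain ⟨Mu, hMu0, hMu⟩ := key
  -- Now bound everything.
  refine ⟨max Mu ((K : ℝ) * (‖z‖ + Mu * ∑ i, ‖a i‖)), ?_⟩
  intro u v hu0 huA hsum
  have hubd : ∀ i, u i ≤ Mu := hMu u v hu0 huA hsum
  constructor
  · intro i; exact le_trans (hubd i) (le_max_left _ _)
  · intro j
    -- bound ‖T v‖
    have hTv : T v = z - ∑ i, u i • a i := by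
      rw [hTapp]; rw [← hsum]; abel
    have hTvnorm : ‖T v‖ ≤ ‖z‖ + Mu * ∑ i, ‖a i‖ := by
      rw [hTv]
      refine le_trans (norm_sub_le _ _) ?_
      gcongr
      refine le_trans (norm_sum_le _ _) ?_
      rw [Finset.mul_sum]
      apply Finset.sum_le_sum
      intro i _
      rw [norm_smul, Real.norm_eq_abs, abs_of_nonneg (hu0 i)]
      exact mul_le_mul_of_nonneg_right (hubd i) (norm_nonneg _)
    have hvnorm : ‖v‖ ≤ (K : ℝ) * ‖T v‖ := by
      have := hK.le_mul_dist v 0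
      simpa [dist_eq_norm] using this
    have : |v j| ≤ ‖v‖ := by
      have := norm_le_pi_norm v j
      simpa [Real.norm_eq_abs] using this
    refine le_trans this (le_trans hvnorm (le_trans ?_ (le_max_right _ _)))
    exact mul_le_mul_of_nonneg_left hTvnorm (by positivity)
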